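/- Let V be a vertex algebra and W any V-module. For a ∈ V and m, n ∈ ℤ one has a_m E_n(W) ⊆ E_{n-m-1}(W); furthermore, a_m E_n(W) ⊆ E_{n-m}(W) for m ≥ 0. -/
import Mathlib


open scoped DirectSum

noncomputable section


/-- Integer binomial coefficient `C(m, i)` for `m : ℤ`, `i : ℕ`. -/
def intBinom (m : ℤ) (i : ℕ) : ℤ :=
  (∏ j ∈ Finset.range i, (m - (j : ℤ))) / (i.factorial : ℤ)

/-- A vertex algebra over `ℂ`: a complex vector space `V` with a vacuum vector and a
linear state-field correspondence `Y`, `Y(v,x) = ∑ₙ vₙ x^{-n-1}`, satisfying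
truncation, vacuum and creation properties, and Borcherds' commutator and
iterate formulas. -/
structure VertexAlgebra (V : Type*) [AddCommGroup V] [Module ℂ V] where
  /-- the coefficients of vertex operators: `Y u n v = uₙ v`. -/
  Y : V →ₗ[ℂ] ℤ → Module.End ℂ V
  /-- the vacuum vector `𝟏`. -/
  vac : V
  trunc : ∀ u v : V, ∃ N : ℕ, ∀ n : ℤ, (N : ℤ) ≤ n → Y u n v = 0
  vac_act : ∀ (n : ℤ) (v : V), Y vac n v = if n = -1 then v else 0
  create : ∀ u : V, Y u (-1) vac = u
  create_nonneg : ∀ (u : V) (n : ℤ), 0 ≤ n → Y u n vac = 0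
  commutator : ∀ (u v w : V) (m n : ℤ),
    Y u m (Y v n w) - Y v n (Y u m w)
      = ∑ᶠ i : ℕ, intBinom m i • Y (Y u i v) (m + n - i) w
  iterate : ∀ (u v w : V) (m n : ℤ),
    Y (Y u m v) n w
      = ∑ᶠ i : ℕ, ((-1 : ℤ) ^ i * intBinom m i) •
          (Y u (m - i) (Y v (n + i) w)
            - ((((-1 : ℤˣ) ^ m : ℤˣ) : ℤ) • Y v (m + n - i) (Y u i w)))

/-- A module for a vertex algebra. -/
structure VAModule {V : Type*} [AddCommGroup V] [Module ℂ V] (va : VertexAlgebra V)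
    (W : Type*) [AddCommGroup W] [Module ℂ W] where
  /-- the action `act v n w = vₙ w`. -/
  act : V →ₗ[ℂ] ℤ → Module.End ℂ W
  trunc : ∀ (v : V) (w : W), ∃ N : ℕ, ∀ n : ℤ, (N : ℤ) ≤ n → act v n w = 0
  vac_act : ∀ (n : ℤ) (w : W), act va.vac n w = if n = -1 then w else 0
  commutator : ∀ (u v : V) (w : W) (m n : ℤ),
    act u m (act v n w) - act v n (act u m w)
      = ∑ᶠ i : ℕ, intBinom m i • act (va.Y u i v) (m + n - i) w
  iterate : ∀ (u v : V) (w : W) (m n : ℤ),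
    act (va.Y u m v) n w
      = ∑ᶠ i : ℕ, ((-1 : ℤ) ^ i * intBinom m i) •
          (act u (m - i) (act v (n + i) w)
            - ((((-1 : ℤˣ) ^ m : ℤˣ) : ℤ) • act v (m + n - i) (act u i w)))

variable {V : Type*} [AddCommGroup V] [Module ℂ V]

/-- The adjoint module of a vertex algebra. -/
def VertexAlgebra.adjoint (va : VertexAlgebra V) : VAModule va V where
  act := va.Y
  trunc := va.trunc
  vac_act := va.vac_act
  commutator := va.commutator
  iterate := va.iterate

variable {W : Type*} [AddCommGroup W] [Module ℂ W]

/-- `Efilt M n = E_n(W)`: the subspace of `W` spanned by the vectors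
`u⁽¹⁾_{-1-k₁} ⋯ u⁽ʳ⁾_{-1-k_r} w` for `r ≥ 1`, `u⁽ⁱ⁾ ∈ V`, `w ∈ W`, `kᵢ ≥ 0`,
`k₁ + ⋯ + k_r ≥ n`. -/
def Efilt {va : VertexAlgebra V} (M : VAModule va W) (n : ℤ) : Submodule ℂ W :=
  Submodule.span ℂ {x : W | ∃ (L : List (V × ℕ)) (w : W), L ≠ [] ∧
    n ≤ (L.map fun p => ((p.2 : ℤ))).sum ∧
    x = L.foldr (fun p acc => M.act p.1 (-1 - (p.2 : ℤ)) acc) w}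

/-- `Cfilt M n = C_n(W)`: the subspace of `W` spanned by the vectors `v_{-n} w`. -/
def Cfilt {va : VertexAlgebra V} (M : VAModule va W) (n : ℕ) : Submodule ℂ W :=
  Submodule.span ℂ {x : W | ∃ (v : V) (w : W), x = M.act v (-(n : ℤ)) w}


section AuxLemmas

variable {va : VertexAlgebra V} (M : VAModule va W)

lemma Efilt_mono {m n : ℤ} (h : m ≤ n) : Efilt M n ≤ Efilt M m :=
  Submodule.span_mono (fun x ⟨L, w, hL, hsum, hx⟩ => ⟨L, w, hL, h.trans hsum, hx⟩)

lemma mem_Efilt_of_nonpos {n : ℤ} (h : n ≤ 0) (w : W) : w ∈ Efilt M n :=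
  Submodule.subset_span ⟨[(va.vac, 0)], w, by simp, by simpa using h, by
    simp [M.vac_act]⟩

lemma act_neg_mem (b : V) (k : ℕ) {n : ℤ} {w : W} (hw : w ∈ Efilt M n) :
    M.act b (-1 - (k : ℤ)) w ∈ Efilt M (n + k) := by
  induction hw using Submodule.span_induction with
  | mem x hx =>
    obtain ⟨L, w', hL, hsum, rfl⟩ := hx
    refine Submodule.subset_span ⟨(b, k) :: L, w', by simp, ?_, rfl⟩
    simp only [List.map_cons, List.sum_cons]
    linarith
  | zero => simp
  | add x y _ _ hx hy => rw [map_add]; exact add_mem hx hy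
  | smul c x _ hx => rw [map_smul]; exact Submodule.smul_mem _ _ hx

lemma foldr_mem (L : List (V × ℕ)) (w : W) :
    L.foldr (fun p acc => M.act p.1 (-1 - (p.2 : ℤ)) acc) w ∈
      Efilt M ((L.map fun p => ((p.2 : ℤ))).sum) := by
  cases L with
  | nil => simpa using mem_Efilt_of_nonpos M le_rfl w
  | cons hd tl => exact Submodule.subset_span ⟨hd :: tl, w, by simp, le_rfl, rfl⟩

lemma main_mem (L : List (V × ℕ)) :
    ∀ (w : W) (a : V) (m : ℤ), 0 ≤ m →
      M.act a m (L.foldr (fun p acc => M.act p.1 (-1 - (p.2 : ℤ)) acc) w) ∈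
        Efilt M ((L.map fun p => ((p.2 : ℤ))).sum - m) := by
  induction L with
  | nil =>
    intro w a m hm
    exact mem_Efilt_of_nonpos M (by simpa using neg_nonpos.mpr hm) _
  | cons hd tl ih =>
    intro w a m hm
    obtain ⟨b, k⟩ := hd
    set y := tl.foldr (fun p acc => M.act p.1 (-1 - (p.2 : ℤ)) acc) w with hy
    set s := (tl.map fun p => ((p.2 : ℤ))).sum with hs
    have hfold : ((b, k) :: tl).foldr
        (fun p acc => M.act p.1 (-1 - (p.2 : ℤ)) acc) w = M.act b (-1 - (k : ℤ)) y := rfl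
    have hsum : ((((b, k) :: tl).map fun p => ((p.2 : ℤ))).sum) = (k : ℤ) + s := by
      simp [hs]
    rw [hfold, hsum]
    have hx : M.act a m (M.act b (-1 - (k : ℤ)) y)
        = M.act b (-1 - (k : ℤ)) (M.act a m y)
          + ∑ᶠ i : ℕ, intBinom m i •
              M.act (va.Y a i b) (m + (-1 - (k : ℤ)) - i) y :=
      sub_eq_iff_eq_add'.mp (M.commutator a b y m (-1 - (k : ℤ)))
    rw [hx]
    refine add_mem ?_ ?_
    · have h1 : M.act b (-1 - (k : ℤ)) (M.act a m y) ∈ Efilt M ((s - m) + k) :=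
        act_neg_mem M b k (ih w a m hm)
      exact Efilt_mono M (by linarith) h1
    · obtain ⟨N, hN⟩ := va.trunc a b
      have hsupp : (Function.support fun i : ℕ => intBinom m i •
          M.act (va.Y a i b) (m + (-1 - (k : ℤ)) - i) y) ⊆ ↑(Finset.range N) := by
        intro i hi
        simp only [Function.mem_support] at hi
        by_contra hmem
        apply hi
        have hNi : (N : ℤ) ≤ (i : ℤ) := by
          simp only [Finset.coe_range, Set.mem_Iio] at hmem
          exact_mod_cast Nat.le_of_not_lt hmem
        rw [hN i hNi]
        simp
      rw [finsum_eq_sum_of_support_subset _ hsupp]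
      refine Submodule.sum_mem _ fun i _ => zsmul_mem ?_ _
      set c := va.Y a (i : ℤ) b with hc
      set t : ℤ := m + (-1 - (k : ℤ)) - i with ht
      rcases le_or_gt 0 t with hT | hT
      · have h2 := ih w c t hT
        refine Efilt_mono M ?_ h2
        rw [ht]
        linarith [Int.natCast_nonneg i]
      · set k' : ℕ := (-1 - t).toNat with hk'
        have hk'' : (k' : ℤ) = -1 - t := Int.toNat_of_nonneg (by omega)
        have h2 : M.act c (-1 - (k' : ℤ)) y ∈ Efilt M (s + k') :=
          act_neg_mem M c k' (foldr_mem M tl w)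
        have ht' : (-1 - (k' : ℤ)) = t := by omega
        rw [ht'] at h2
        refine Efilt_mono M ?_ h2
        rw [hk'', ht]
        linarith [Int.natCast_nonneg i]

lemma part2_mem (a : V) (m n : ℤ) (hm : 0 ≤ m) {w : W} (hw : w ∈ Efilt M n) :
    M.act a m w ∈ Efilt M (n - m) := by
  induction hw using Submodule.span_induction with
  | mem x hx =>
    obtain ⟨L, w', hL, hsum, rfl⟩ := hx
    exact Efilt_mono M (by linarith) (main_mem M L w' a m hm)
  | zero => simp
  | add x y _ _ hx hy => rw [map_add]; exact add_mem hx hy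
  | smul c x _ hx => rw [map_smul]; exact Submodule.smul_mem _ _ hx

end AuxLemmas

/-- **Lemma 2.11 (lbaasicproperty).** For a vertex algebra `V`, a `V`-module `W`,
`a ∈ V` and `m, n ∈ ℤ`, one has `a_m E_n(W) ⊆ E_{n-m-1}(W)`, and furthermore
`a_m E_n(W) ⊆ E_{n-m}(W)` for `m ≥ 0`. -/
theorem stmt2 {V : Type*} [AddCommGroup V] [Module ℂ V] {W : Type*} [AddCommGroup W]
    [Module ℂ W] (va : VertexAlgebra V) (M : VAModule va W) (a : V) (m n : ℤ) :
    (∀ w ∈ Efilt M n, M.act a m w ∈ Efilt M (n - m - 1)) ∧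
    (0 ≤ m → ∀ w ∈ Efilt M n, M.act a m w ∈ Efilt M (n - m)) := by
  constructor
  · intro w hw
    rcases le_or_gt 0 m with hm | hm
    · exact Efilt_mono M (by linarith) (part2_mem M a m n hm hw)
    · set k : ℕ := (-1 - m).toNat with hk
      have hkk : (k : ℤ) = -1 - m := Int.toNat_of_nonneg (by omega)
      have h1 : M.act a (-1 - (k : ℤ)) w ∈ Efilt M (n + k) := act_neg_mem M a k hw
      have e1 : (-1 - (k : ℤ)) = m := by omega
      have e2 : n + (k : ℤ) = n - m - 1 := by omega
      rwa [e1, e2] at h1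
  · intro hm w hw
    exact part2_mem M a m n hm hw

end
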